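/- Define P_n(σ) = (1/√π)∫_{−∞}^{∞} (ρ−σ)(ρ+σ) H_n(ρ−σ) H_n(ρ+σ) e^{−ρ²} dρ, where H_n is the n-th physicists' Hermite polynomial. Then P_n is a polynomial in σ of degree 2n+2 containing only even powers of σ. -/

import Mathlib

open Polynomial MeasureTheory Real

/-- The physicists' Hermite polynomials. -/
noncomputable def physHermite : ℕ → Polynomial ℝ
  | 0 => 1
  | 1 => 2 * Polynomial.X
  | n + 2 => 2 * Polynomial.X * physHermite (n + 1)
      - Polynomial.C (2 * ((n : ℝ) + 1)) * physHermite n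

/-- The mixing integral
`Pₙ(σ) = (1/√π) ∫ (ρ-σ)(ρ+σ) Hₙ(ρ-σ) Hₙ(ρ+σ) e^{-ρ²} dρ`. -/
noncomputable def Pmix (n : ℕ) (σ : ℝ) : ℝ :=
  (1 / Real.sqrt π) * ∫ ρ : ℝ, (ρ - σ) * (ρ + σ) * (physHermite n).eval (ρ - σ)
    * (physHermite n).eval (ρ + σ) * Real.exp (-ρ ^ 2)



lemma physHermite_basic (n : ℕ) :
    (physHermite n).natDegree ≤ n ∧ (physHermite n).coeff n = 2 ^ n := by
  induction n using Nat.strong_induction_on with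
  | _ n ih =>
    match n with
    | 0 => constructor <;> simp [physHermite]
    | 1 =>
      constructor
      · rw [physHermite]
        calc ((2 : ℝ[X]) * X).natDegree ≤ (2 : ℝ[X]).natDegree + X.natDegree :=
              natDegree_mul_le
          _ ≤ 1 := by simp
      · rw [physHermite]
        have : ((2 : ℝ[X]) * X) = Polynomial.C 2 * X := by
          rw [← map_ofNat (Polynomial.C : ℝ →+* ℝ[X]) 2]
        rw [this, coeff_C_mul, coeff_X_one]; norm_num
    | (m + 2) =>
      obtain ⟨h1d, h1c⟩ := ih (m + 1) (by omega)
      obtain ⟨h0d, h0c⟩ := ih m (by omega)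
      rw [physHermite]
      constructor
      · refine le_trans (natDegree_sub_le _ _) (max_le ?_ ?_)
        · calc (2 * X * physHermite (m + 1)).natDegree
              ≤ ((2 : ℝ[X]) * X).natDegree + (physHermite (m + 1)).natDegree :=
                natDegree_mul_le
            _ ≤ 1 + (m + 1) := by
                gcongr
                calc ((2 : ℝ[X]) * X).natDegree ≤ (2 : ℝ[X]).natDegree + X.natDegree :=
                    natDegree_mul_le
                  _ ≤ 1 := by simp
            _ = m + 2 := by omega
        · calc (Polynomial.C (2 * ((m : ℝ) + 1)) * physHermite m).natDegree
              ≤ (Polynomial.C (2 * ((m : ℝ) + 1))).natDegree + (physHermite m).natDegree :=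
                natDegree_mul_le
            _ ≤ 0 + m := by gcongr; exact le_of_eq (natDegree_C _)
            _ ≤ m + 2 := by omega
      · have h2X : (2 : ℝ[X]) * X * physHermite (m + 1)
            = Polynomial.C 2 * (X * physHermite (m + 1)) := by
          rw [← map_ofNat (Polynomial.C : ℝ →+* ℝ[X]) 2]; ring
        rw [coeff_sub, h2X, coeff_C_mul, coeff_X_mul, h1c, coeff_C_mul,
          coeff_eq_zero_of_natDegree_lt (lt_of_le_of_lt h0d (by omega))]
        ring

lemma physHermite_coeff_self (n : ℕ) : (physHermite n).coeff n = 2 ^ n :=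
  (physHermite_basic n).2

lemma physHermite_ne_zero (n : ℕ) : physHermite n ≠ 0 := fun h => by
  have := physHermite_coeff_self n
  rw [h] at this
  simp at this
  exact absurd this (by positivity)

lemma physHermite_natDegree (n : ℕ) : (physHermite n).natDegree = n :=
  le_antisymm (physHermite_basic n).1
    (le_natDegree_of_ne_zero (by rw [physHermite_coeff_self]; positivity))

lemma physHermite_leadingCoeff (n : ℕ) : (physHermite n).leadingCoeff = 2 ^ n := by
  rw [leadingCoeff, physHermite_natDegree, physHermite_coeff_self]

lemma physHermite_comp_neg_X (n : ℕ) :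
    (physHermite n).comp (-X) = (-1) ^ n * physHermite n := by
  induction n using Nat.strong_induction_on with
  | _ n ih =>
    match n with
    | 0 => simp [physHermite]
    | 1 => simp [physHermite]
    | (m + 2) =>
      rw [physHermite]
      simp only [sub_comp, mul_comp, X_comp, C_comp, ih (m + 1) (by omega), ih m (by omega)]
      have h2 : ((2 : ℝ[X])).comp (-X) = 2 := by simp
      rw [h2]
      ring


/-- Total-degree bound for an element of `ℝ[σ][ρ]`. -/
def TD (d : ℕ) (Q : Polynomial (Polynomial ℝ)) : Prop :=
  ∀ k m : ℕ, d < k + m → (Q.coeff k).coeff m = 0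

lemma TD.mono {d e : ℕ} {Q : Polynomial (Polynomial ℝ)} (h : TD d Q) (hde : d ≤ e) :
    TD e Q := fun k m hk => h k m (lt_of_le_of_lt hde hk)

lemma TD.mul {d e : ℕ} {P Q : Polynomial (Polynomial ℝ)} (hP : TD d P) (hQ : TD e Q) :
    TD (d + e) (P * Q) := by
  intro k m hkm
  rw [coeff_mul, finset_sum_coeff]
  refine Finset.sum_eq_zero fun x hx => ?_
  rw [coeff_mul]
  refine Finset.sum_eq_zero fun y hy => ?_
  rw [Finset.HasAntidiagonal.mem_antidiagonal] at hx hy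
  rcases lt_or_ge d (x.1 + y.1) with h | h
  · rw [hP _ _ h, zero_mul]
  · rw [hQ _ _ (by omega), mul_zero]

lemma TD.pow {d : ℕ} {Q : Polynomial (Polynomial ℝ)} (h : TD d Q) (j : ℕ) :
    TD (j * d) (Q ^ j) := by
  induction j with
  | zero =>
      intro k m hkm
      rw [pow_zero, coeff_one]
      rcases Nat.eq_zero_or_pos k with hk | hk
      · subst hk
        rw [if_pos rfl, coeff_one, if_neg (by omega)]
      · rw [if_neg (by omega)]
        simp
  | succ j ihj =>
      rw [pow_succ]
      exact (ihj.mul h).mono (by ring_nf; omega)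

lemma TD_C_C (a : ℝ) : TD 0 (C (C a)) := by
  intro k m hkm
  rcases Nat.eq_zero_or_pos k with hk | hk
  · subst hk
    rw [coeff_C, if_pos rfl, coeff_C, if_neg (by omega)]
  · rw [coeff_C, if_neg (by omega)]
    simp

lemma TD.add {d : ℕ} {P Q : Polynomial (Polynomial ℝ)} (hP : TD d P) (hQ : TD d Q) :
    TD d (P + Q) := by
  intro k m hkm
  rw [coeff_add, coeff_add, hP _ _ hkm, hQ _ _ hkm, add_zero]

lemma TD.sum {d : ℕ} {ι : Type*} (s : Finset ι) (f : ι → Polynomial (Polynomial ℝ))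
    (h : ∀ i ∈ s, TD d (f i)) : TD d (∑ i ∈ s, f i) := by
  intro k m hkm
  rw [finset_sum_coeff, finset_sum_coeff]
  exact Finset.sum_eq_zero fun i hi => h i hi k m hkm

lemma TD_X_add (c : Polynomial ℝ) (hc : c.natDegree ≤ 1) : TD 1 (X + C c) := by
  intro k m hkm
  match k with
  | 0 =>
    simp only [coeff_add, coeff_X_zero, coeff_C_zero, zero_add]
    exact coeff_eq_zero_of_natDegree_lt (by omega)
  | 1 =>
    simp only [coeff_add, coeff_X_one, coeff_C, if_neg one_ne_zero, add_zero, coeff_one]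
    rw [if_neg (by omega)]
  | (j + 2) =>
    simp only [coeff_add, coeff_X, if_neg (by omega : ¬(1 : ℕ) = j + 2), coeff_C,
      if_neg (by omega : ¬(j + 2) = 0)]
    simp

noncomputable def Qb (n : ℕ) : Polynomial (Polynomial ℝ) :=
  (X + C (-X)) * (X + C X) * (((physHermite n).map C).comp (X + C (-X)))
    * (((physHermite n).map C).comp (X + C X))

lemma TD_comp (n : ℕ) (c : Polynomial ℝ) (hc : c.natDegree ≤ 1) :
    TD n (((physHermite n).map C).comp (X + C c)) := by
  rw [comp_eq_sum_left, Polynomial.sum_def]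
  refine TD.sum _ _ fun e he => ?_
  have he' : e ≤ n := by
    have := le_natDegree_of_mem_supp e he
    calc e ≤ (((physHermite n).map C)).natDegree := this
      _ ≤ (physHermite n).natDegree := natDegree_map_le
      _ = n := physHermite_natDegree n
  rw [coeff_map]
  have h1 : TD (0 + e * 1) (C (C ((physHermite n).coeff e)) * (X + C c) ^ e) :=
    (TD_C_C _).mul ((TD_X_add c hc).pow e)
  exact h1.mono (by omega)

lemma TD_Qb (n : ℕ) : TD (2 * n + 2) (Qb n) := by
  have h := (((TD_X_add (-X) (by simp)).mul (TD_X_add X (by simp))).mul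
      (TD_comp n (-X) (by simp))).mul (TD_comp n X (by simp))
  exact h.mono (by omega)

lemma Qb_natDegree_le (n : ℕ) : (Qb n).natDegree ≤ 2 * n + 2 := by
  refine natDegree_le_iff_coeff_eq_zero.mpr fun N hN => ?_
  ext m
  rw [coeff_zero]
  exact TD_Qb n N m (by omega)

lemma Qb_coeff_natDegree_le (n : ℕ) (k : ℕ) : ((Qb n).coeff k).natDegree ≤ 2 * n + 2 := by
  refine natDegree_le_iff_coeff_eq_zero.mpr fun N hN => ?_
  exact TD_Qb n k N (by omega)

lemma Qb_coeff_high (n : ℕ) (k : ℕ) (hk : 1 ≤ k) :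
    ((Qb n).coeff k).coeff (2 * n + 2) = 0 :=
  TD_Qb n k (2 * n + 2) (by omega)

lemma Qb_eval₂ (n : ℕ) (σ ρ : ℝ) :
    (Qb n).eval₂ (evalRingHom σ) ρ
      = (ρ - σ) * (ρ + σ) * (physHermite n).eval (ρ - σ) * (physHermite n).eval (ρ + σ) := by
  have hCC : (evalRingHom σ).comp (C : ℝ →+* Polynomial ℝ) = RingHom.id ℝ := by
    ext r
    simp
  have hcomp : ∀ (c : Polynomial ℝ) (x : ℝ),
      ((physHermite n).map C).eval₂ (evalRingHom σ) x = (physHermite n).eval x := by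
    intro c x
    rw [eval₂_map, hCC]
    rfl
  rw [Qb, eval₂_mul, eval₂_mul, eval₂_mul, eval₂_comp, eval₂_comp,
    eval₂_add, eval₂_X, eval₂_C, eval₂_add, eval₂_X, eval₂_C]
  have h1 : (evalRingHom σ) (-X) = -σ := by simp
  have h2 : (evalRingHom σ) X = σ := by simp
  rw [h1, h2, hcomp (-X), hcomp X]
  ring_nf

lemma Qb_coeff_zero (n : ℕ) :
    ((Qb n).coeff 0).coeff (2 * n + 2) = (-1) ^ (n + 1) * 4 ^ n := by
  have h0 : (Qb n).coeff 0 = (-1) ^ (n + 1) * ((X * physHermite n) * (X * physHermite n)) := by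
    rw [coeff_zero_eq_eval_zero, Qb, eval_mul, eval_mul, eval_mul, eval_comp, eval_comp,
      eval_add, eval_X, eval_C, eval_add, eval_X, eval_C, zero_add, zero_add]
    have hm : ∀ q : Polynomial ℝ, ((physHermite n).map C).eval q = (physHermite n).comp q := by
      intro q
      rw [eval_map]
      rfl
    rw [hm, hm, physHermite_comp_neg_X, comp_X]
    ring
  rw [h0]
  have hd : (X * physHermite n).natDegree = n + 1 := by
    rw [natDegree_mul X_ne_zero (physHermite_ne_zero n), natDegree_X, physHermite_natDegree]
    omega
  have hl : (X * physHermite n).leadingCoeff = 2 ^ n := by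
    rw [leadingCoeff_mul, leadingCoeff_X, one_mul, leadingCoeff, physHermite_natDegree,
      physHermite_coeff_self]
  have key : ((X * physHermite n) * (X * physHermite n)).coeff (2 * n + 2) = 4 ^ n := by
    have := coeff_mul_degree_add_degree (X * physHermite n) (X * physHermite n)
    rw [hd, hl] at this
    have harith : (n + 1) + (n + 1) = 2 * n + 2 := by omega
    rw [harith] at this
    rw [this]
    rw [show (4 : ℝ) = 2 ^ 2 by norm_num, ← pow_mul]
    ring_nf
  have hC : ((-1 : Polynomial ℝ)) ^ (n + 1) = C ((-1 : ℝ) ^ (n + 1)) := by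
    rw [map_pow, map_neg, map_one]
  rw [hC, coeff_C_mul, key]

noncomputable def Mnt (k : ℕ) : ℝ := ∫ x : ℝ, x ^ k * Real.exp (-x ^ 2)

lemma integrable_pow_exp (k : ℕ) :
    Integrable fun x : ℝ => x ^ k * Real.exp (-x ^ 2) := by
  have h := integrable_rpow_mul_exp_neg_mul_sq (b := 1) one_pos
    (s := (k : ℝ)) (lt_of_lt_of_le neg_one_lt_zero (Nat.cast_nonneg k))
  have heq : ∀ x : ℝ, x ^ ((k : ℝ)) * Real.exp (-1 * x ^ 2)
      = x ^ k * Real.exp (-x ^ 2) := by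
    intro x
    rw [Real.rpow_natCast, neg_one_mul]
  simpa only [heq] using h

lemma Mnt_zero : Mnt 0 = Real.sqrt π := by
  have h := integral_gaussian 1
  simp only [neg_one_mul, div_one] at h
  rw [Mnt]
  simpa using h

lemma integral_eval (n : ℕ) (σ : ℝ) :
    (∫ ρ : ℝ, (ρ - σ) * (ρ + σ) * (physHermite n).eval (ρ - σ)
      * (physHermite n).eval (ρ + σ) * Real.exp (-ρ ^ 2))
    = ∑ k ∈ Finset.range (2 * n + 3), ((Qb n).coeff k).eval σ * Mnt k := by
  have hdeg : (Qb n).natDegree < 2 * n + 3 := lt_of_le_of_lt (Qb_natDegree_le n) (by omega)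
  have hrep : ∀ ρ : ℝ, (ρ - σ) * (ρ + σ) * (physHermite n).eval (ρ - σ)
      * (physHermite n).eval (ρ + σ)
      = ∑ k ∈ Finset.range (2 * n + 3), ((Qb n).coeff k).eval σ * ρ ^ k := by
    intro ρ
    rw [← Qb_eval₂ n σ ρ, eval₂_eq_sum_range' _ hdeg]
    rfl
  have hfun : (fun ρ : ℝ => (ρ - σ) * (ρ + σ) * (physHermite n).eval (ρ - σ)
      * (physHermite n).eval (ρ + σ) * Real.exp (-ρ ^ 2))
      = fun ρ : ℝ => ∑ k ∈ Finset.range (2 * n + 3),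
          ((Qb n).coeff k).eval σ * (ρ ^ k * Real.exp (-ρ ^ 2)) := by
    funext ρ
    rw [hrep ρ, Finset.sum_mul]
    simp [mul_assoc]
  rw [hfun, integral_finset_sum _ fun k _ => (integrable_pow_exp k).const_mul _]
  refine Finset.sum_congr rfl fun k _ => ?_
  rw [MeasureTheory.integral_const_mul]
  rfl

noncomputable def pfin (n : ℕ) : Polynomial ℝ :=
  (Real.sqrt π)⁻¹ • ∑ k ∈ Finset.range (2 * n + 3), Mnt k • (Qb n).coeff k

lemma pfin_eval (n : ℕ) (σ : ℝ) : (pfin n).eval σ = Pmix n σ := by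
  rw [Pmix, integral_eval, pfin, eval_smul, eval_finset_sum, smul_eq_mul, one_div,
    Finset.mul_sum, Finset.mul_sum]
  refine Finset.sum_congr rfl fun k _ => ?_
  rw [eval_smul, smul_eq_mul]
  ring

lemma sqrtpi_ne : Real.sqrt π ≠ 0 := (Real.sqrt_pos.mpr pi_pos).ne'

lemma pfin_coeff_top (n : ℕ) : (pfin n).coeff (2 * n + 2) = (-1) ^ (n + 1) * 4 ^ n := by
  rw [pfin, coeff_smul, finset_sum_coeff, smul_eq_mul]
  rw [Finset.sum_eq_single 0]
  · rw [coeff_smul, smul_eq_mul, Mnt_zero, Qb_coeff_zero]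
    field_simp
  · intro b _ hb
    rw [coeff_smul, smul_eq_mul, Qb_coeff_high n b (by omega), mul_zero]
  · intro h
    exact absurd (Finset.mem_range.mpr (by omega)) h

lemma pfin_natDegree (n : ℕ) : (pfin n).natDegree = 2 * n + 2 := by
  refine le_antisymm ?_ ?_
  · refine le_trans (natDegree_smul_le _ _) ?_
    exact natDegree_sum_le_of_forall_le _ _ fun k _ =>
      le_trans (natDegree_smul_le _ _) (Qb_coeff_natDegree_le n k)
  · refine le_natDegree_of_ne_zero ?_
    rw [pfin_coeff_top]
    exact mul_ne_zero (pow_ne_zero _ (by norm_num)) (by positivity)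

lemma coeff_comp_neg_X (p : Polynomial ℝ) (k : ℕ) :
    (p.comp (-X)).coeff k = (-1) ^ k * p.coeff k := by
  rw [comp_eq_sum_left, Polynomial.sum_def, finset_sum_coeff]
  have hterm : ∀ e : ℕ, (C (p.coeff e) * (-X) ^ e).coeff k
      = if e = k then (-1) ^ k * p.coeff e else 0 := by
    intro e
    rw [neg_pow, show ((-1 : Polynomial ℝ)) ^ e = C ((-1 : ℝ) ^ e) by
      rw [map_pow, map_neg, map_one], ← mul_assoc, ← C_mul, coeff_C_mul, coeff_X_pow]
    by_cases h : e = k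
    · subst h
      rw [if_pos rfl, if_pos rfl, mul_one]
      ring
    · rw [if_neg (fun hh => h hh.symm), if_neg h, mul_zero]
  simp only [hterm]
  rw [Finset.sum_ite_eq' p.support k fun e => (-1) ^ k * p.coeff e]
  by_cases h : k ∈ p.support
  · rw [if_pos h]
  · rw [if_neg h, Polynomial.notMem_support_iff.mp h, mul_zero]

/-- `Pₙ` is a polynomial in `σ` of degree `2n+2` containing only even powers. -/
theorem Pmix_even_polynomial (n : ℕ) :
    ∃ p : Polynomial ℝ, p.natDegree = 2 * n + 2 ∧ (∀ k, Odd k → p.coeff k = 0) ∧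
      ∀ σ : ℝ, Pmix n σ = p.eval σ := by
  refine ⟨pfin n, pfin_natDegree n, ?_, fun σ => (pfin_eval n σ).symm⟩
  have heven : ∀ σ : ℝ, Pmix n (-σ) = Pmix n σ := by
    intro σ
    rw [Pmix, Pmix]
    congr 1
    have : (fun ρ : ℝ => (ρ - -σ) * (ρ + -σ) * (physHermite n).eval (ρ - -σ)
        * (physHermite n).eval (ρ + -σ) * Real.exp (-ρ ^ 2))
        = fun ρ : ℝ => (ρ - σ) * (ρ + σ) * (physHermite n).eval (ρ - σ)
          * (physHermite n).eval (ρ + σ) * Real.exp (-ρ ^ 2) := by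
      funext ρ
      rw [sub_neg_eq_add, ← sub_eq_add_neg]
      ring
    rw [this]
  have hcomp : (pfin n).comp (-X) = pfin n := by
    refine Polynomial.funext fun σ => ?_
    rw [eval_comp, eval_neg, eval_X, pfin_eval, pfin_eval, heven]
  intro k hk
  have := congrArg (fun q => q.coeff k) hcomp
  simp only [coeff_comp_neg_X] at this
  rw [hk.neg_one_pow] at this
  linarith
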